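/- For all real θ with sin θ ≠ 0 and real numbers a, b, α, β satisfying a = |α−β|/2 and b = |α+β|/2, setting r± = −αβ ± √((1−α²)(1−β²)) (with |α| ≤ 1, |β| ≤ 1), one has (a·tan(θ/2) − b·cot(θ/2))² = 1 − (a+b)² + (cos θ − r₊)(cos θ − r₋)/sin² θ. -/
import Mathlib


open Real

theorem stmt0 (θ a b α β rp rm : ℝ) (hθ : Real.sin θ ≠ 0)
    (hα : |α| ≤ 1) (hβ : |β| ≤ 1)
    (ha : a = |α - β| / 2) (hb : b = |α + β| / 2)
    (hrp : rp = -(α * β) + Real.sqrt ((1 - α ^ 2) * (1 - β ^ 2)))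
    (hrm : rm = -(α * β) - Real.sqrt ((1 - α ^ 2) * (1 - β ^ 2))) :
    (a * Real.tan (θ / 2) - b * (Real.cos (θ / 2) / Real.sin (θ / 2))) ^ 2
      = 1 - (a + b) ^ 2 + (Real.cos θ - rp) * (Real.cos θ - rm) / Real.sin θ ^ 2 := by
  have ha2 : a ^ 2 = (α - β) ^ 2 / 4 := by rw [ha]; rw [div_pow, sq_abs]; norm_num
  have hb2 : b ^ 2 = (α + β) ^ 2 / 4 := by rw [hb]; rw [div_pow, sq_abs]; norm_num
  have hD : (Real.sqrt ((1 - α ^ 2) * (1 - β ^ 2))) ^ 2 = (1 - α ^ 2) * (1 - β ^ 2) := by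
    apply Real.sq_sqrt
    have h1 : α ^ 2 ≤ 1 := by nlinarith [abs_nonneg α, sq_abs α]
    have h2 : β ^ 2 ≤ 1 := by nlinarith [abs_nonneg β, sq_abs β]
    nlinarith
  set D := Real.sqrt ((1 - α ^ 2) * (1 - β ^ 2)) with hDdef
  set s := Real.sin (θ / 2) with hs
  set c := Real.cos (θ / 2) with hc
  have hsin : Real.sin θ = 2 * s * c := by
    rw [hs, hc, ← Real.sin_two_mul]; ring_nf
  have hc2 : c ^ 2 = 1 - s ^ 2 := by
    have := Real.sin_sq_add_cos_sq (θ / 2); linarith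
  have hcos : Real.cos θ = 1 - 2 * s ^ 2 := by
    have h := Real.cos_two_mul (θ / 2)
    have h2 : 2 * (θ / 2) = θ := by ring
    rw [h2] at h
    rw [h, ← hc, hc2]; ring
  have hs0 : s ≠ 0 := by
    intro h; apply hθ; rw [hsin, h]; ring
  have hc0 : c ≠ 0 := by
    intro h; apply hθ; rw [hsin, h]; ring
  have htan : Real.tan (θ / 2) = s / c := Real.tan_eq_sin_div_cos _
  rw [htan, hrp, hrm, hsin, hcos]
  have lhs_eq : (a * (s / c) - b * (c / s)) ^ 2
      = (4 * a ^ 2 * s ^ 4 + 4 * b ^ 2 * c ^ 4 - 8 * a * b * s ^ 2 * c ^ 2)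
        / (4 * s ^ 2 * c ^ 2) := by
    field_simp
    ring
  have rhs_eq : 1 - (a + b) ^ 2
      + ((1 - 2 * s ^ 2) - (-(α * β) + D)) * ((1 - 2 * s ^ 2) - (-(α * β) - D))
        / (2 * s * c) ^ 2
      = ((1 - (a + b) ^ 2) * (4 * s ^ 2 * c ^ 2) + (1 - 2 * s ^ 2 + α * β) ^ 2 - D ^ 2)
        / (4 * s ^ 2 * c ^ 2) := by
    field_simp
    ring
  rw [lhs_eq, rhs_eq]
  congr 1
  linear_combination (4 * s ^ 4 + 4 * s ^ 2 * c ^ 2) * ha2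
    + (4 * c ^ 4 + 4 * s ^ 2 * c ^ 2) * hb2 + hD
    + ((α + β) ^ 2 * c ^ 2 + 2 * (α ^ 2 + β ^ 2) * s ^ 2 - 4 * s ^ 2
        - (α + β) ^ 2 * (s ^ 2 - 1)) * hc2
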